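/- Let p, q, g ≥ 1 be integers with q·(g−1) < p. Consider a monotone lattice path from (0,0) to (p,q) (p E-steps and q N-steps), with f(x,y) := q·x − p·y and spread defined as the difference between the maximum and minimum of f over the vertices of the path; assume the path is thin, i.e., its spread is at most p+q. Extend the step sequence (s_1, …, s_{p+q}) to all integer indices by s_{i+p+q} = s_i. Then between any two cyclically consecutive N-steps there are at least g−1 E-steps; that is, every horizontal leg of a thin torus front contains at least g vertices. -/

import Mathlib

/-- The value `f(v_j) = q·x_j − p·y_j` at the `j`-th vertex of the monotone
lattice path to `(p,q)` encoded by the step sequence `s : Fin (p+q) → Bool`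
(`true` = eastbound step `E = (1,0)`, `false` = northbound step `N = (0,1)`).
(Here the first argument counts eastbound steps, the second northbound ones.) -/
def pathF (m n : ℕ) (s : Fin (m + n) → Bool) (j : ℕ) : ℤ :=
  (n : ℤ) * ((Finset.univ.filter (fun i : Fin (m + n) => i.val < j ∧ s i = true)).card : ℤ)
  - (m : ℤ) * ((Finset.univ.filter (fun i : Fin (m + n) => i.val < j ∧ s i = false)).card : ℤ)

/-- The spread of a monotone lattice path: the difference between the maximum
and the minimum of `f` over the vertices of the path. -/
def pathSpread (m n : ℕ) (s : Fin (m + n) → Bool) : ℤ :=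
  ((Finset.range (m + n + 1)).image (pathF m n s)).max'
    (Finset.Nonempty.image (Finset.nonempty_range_iff.mpr (Nat.succ_ne_zero _)) _)
  - ((Finset.range (m + n + 1)).image (pathF m n s)).min'
    (Finset.Nonempty.image (Finset.nonempty_range_iff.mpr (Nat.succ_ne_zero _)) _)

/-- The periodic extension of the step sequence `s : Fin N → Bool` to all of `ℕ`. -/
def stepExt (N : ℕ) (s : Fin N → Bool) (i : ℕ) : Bool :=
  if h : 0 < N then s ⟨i % N, Nat.mod_lt _ h⟩ else true

namespace Stmt14Aux

variable (p q : ℕ) (s : Fin (p + q) → Bool)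

def w (l : ℕ) : ℤ := if stepExt (p + q) s l then (q : ℤ) else -(p : ℤ)

def F (k : ℕ) : ℤ := ∑ l ∈ Finset.range k, w p q s l

lemma F_succ (k : ℕ) : F p q s (k + 1) = F p q s k + w p q s k :=
  Finset.sum_range_succ _ _

lemma w_add (l : ℕ) : w p q s (l + (p + q)) = w p q s l := by
  simp [w, stepExt, Nat.add_mod_right]

lemma w_fin (hN : 0 < p + q) (i : Fin (p + q)) :
    w p q s i.val = if s i then (q : ℤ) else -(p : ℤ) := by
  simp [w, stepExt, hN, Nat.mod_eq_of_lt i.isLt]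

lemma sum_period (hp : 1 ≤ p)
    (hs : (Finset.univ.filter (fun i => s i = true)).card = p) :
    ∑ l ∈ Finset.range (p + q), w p q s l = 0 := by
  have hN : 0 < p + q := by omega
  rw [← Fin.sum_univ_eq_sum_range]
  have h1 : ∀ i : Fin (p + q), w p q s i.val = if s i then (q : ℤ) else -(p : ℤ) :=
    w_fin p q s hN
  simp only [h1]
  rw [Finset.sum_ite]
  have hcard : (Finset.univ.filter (fun i : Fin (p + q) => s i = true)).card
      + (Finset.univ.filter (fun i : Fin (p + q) => ¬ s i = true)).card = p + q := by
    rw [Finset.card_filter_add_card_filter_not]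
    simp
  have hB : (Finset.univ.filter (fun i : Fin (p + q) => ¬ s i = true)).card = q := by
    omega
  rw [Finset.sum_const, Finset.sum_const, hs, hB]
  push_cast
  ring

lemma sum_window (hp : 1 ≤ p)
    (hs : (Finset.univ.filter (fun i => s i = true)).card = p) (k : ℕ) :
    ∑ l ∈ Finset.range (p + q), w p q s (k + l) = 0 := by
  induction k with
  | zero => simpa using sum_period p q s hp hs
  | succ k ih =>
    have hA : ∑ l ∈ Finset.range (p + q + 1), w p q s (k + l)
        = (∑ l ∈ Finset.range (p + q), w p q s (k + l)) + w p q s (k + (p + q)) :=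
      Finset.sum_range_succ _ _
    have hB : ∑ l ∈ Finset.range (p + q + 1), w p q s (k + l)
        = (∑ l ∈ Finset.range (p + q), w p q s (k + (l + 1))) + w p q s (k + 0) :=
      Finset.sum_range_succ' _ _
    have hw : w p q s (k + (p + q)) = w p q s (k + 0) := by
      rw [Nat.add_zero, w_add]
    have : ∑ l ∈ Finset.range (p + q), w p q s (k + (l + 1))
        = ∑ l ∈ Finset.range (p + q), w p q s (k + l) := by
      rw [← hw] at hB
      omega
    calc ∑ l ∈ Finset.range (p + q), w p q s (k + 1 + l)
        = ∑ l ∈ Finset.range (p + q), w p q s (k + (l + 1)) := by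
          apply Finset.sum_congr rfl; intro l _; ring_nf
      _ = 0 := by rw [this, ih]

lemma F_mod (hp : 1 ≤ p)
    (hs : (Finset.univ.filter (fun i => s i = true)).card = p) (k : ℕ) :
    F p q s k = F p q s (k % (p + q)) := by
  have key : ∀ m r : ℕ, F p q s (r + (p + q) * m) = F p q s r := by
    intro m
    induction m with
    | zero => intro r; simp
    | succ m ih =>
      intro r
      have : r + (p + q) * (m + 1) = (r + (p + q) * m) + (p + q) := by ring
      rw [this]
      unfold F
      rw [Finset.sum_range_add]
      rw [sum_window p q s hp hs]
      simpa [F] using ih r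
  conv_lhs => rw [← Nat.mod_add_div k (p + q)]
  exact key _ _

lemma pathF_eq (j : ℕ) (hj : j ≤ p + q) (hN : 0 < p + q) :
    pathF p q s j = F p q s j := by
  have step1 : (Finset.range (p + q)).filter (fun l => l < j) = Finset.range j := by
    ext l; simp only [Finset.mem_filter, Finset.mem_range]; omega
  have : F p q s j = ∑ i ∈ Finset.univ.filter (fun i : Fin (p + q) => i.val < j),
      (if s i then (q : ℤ) else -(p : ℤ)) := by
    unfold F
    rw [← step1, Finset.sum_filter, ← Fin.sum_univ_eq_sum_range
      (fun l => if l < j then w p q s l else 0), ← Finset.sum_filter]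
    exact Finset.sum_congr rfl (fun i _ => w_fin p q s hN i)
  rw [this, Finset.sum_ite, Finset.sum_const, Finset.sum_const,
    Finset.filter_filter, Finset.filter_filter]
  have hfalse : (Finset.univ.filter (fun i : Fin (p + q) => i.val < j ∧ ¬ s i = true))
      = Finset.univ.filter (fun i : Fin (p + q) => i.val < j ∧ s i = false) := by
    apply Finset.filter_congr; intro i _; simp [Bool.not_eq_true]
  rw [hfalse]
  unfold pathF
  push_cast
  ring

end Stmt14Aux

/-- **Every horizontal leg of a thin torus front contains at least `g` vertices.**
Let `p, q, g ≥ 1` with `q(g−1) < p`, and let `s` encode a monotone lattice path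
from `(0,0)` to `(p,q)` which is thin, i.e., whose spread is at most `p+q`.
Extend the step sequence periodically. Then between any two cyclically
consecutive northbound steps there are at least `g−1` eastbound steps. -/
theorem cohomology_of_colorings_of_cycles_stmt14
    (p q g : ℕ) (hp : 1 ≤ p) (hq : 1 ≤ q) (hg : 1 ≤ g)
    (hpg : q * (g - 1) < p) (s : Fin (p + q) → Bool)
    (hs : (Finset.univ.filter (fun i => s i = true)).card = p)
    (hthin : pathSpread p q s ≤ (p + q : ℤ)) :
    ∀ i j : ℕ, i < j →
      stepExt (p + q) s i = false → stepExt (p + q) s j = false →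
      (∀ l : ℕ, i < l → l < j → stepExt (p + q) s l = true) →
      i + g ≤ j := by
  intro i j hij hi hj hmid
  by_contra hcon
  push_neg at hcon
  have hN : 0 < p + q := by omega
  have hg2 : 2 ≤ g := by omega
  open Stmt14Aux in
  -- F values along the leg
  have hFi1 : F p q s (i + 1) = F p q s i - p := by
    rw [F_succ]; simp [w, hi, sub_eq_add_neg]
  have hFj1 : F p q s (j + 1) = F p q s j - p := by
    rw [F_succ]; simp [w, hj, sub_eq_add_neg]
  have hkey : ∀ l, i + 1 ≤ l → l ≤ j →
      F p q s l = F p q s (i + 1) + (q : ℤ) * ((l : ℤ) - (i : ℤ) - 1) := by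
    intro l hl
    induction l, hl using Nat.le_induction with
    | base => intro _; push_cast; ring
    | succ l hl ih =>
      intro hlj
      have h1 := ih (by omega)
      have hw : w p q s l = q := by
        have := hmid l (by omega) (by omega)
        simp [w, this]
      rw [F_succ, h1, hw]
      push_cast; ring
  have hFj : F p q s j = F p q s (i + 1) + (q : ℤ) * ((j : ℤ) - (i : ℤ) - 1) :=
    hkey j (by omega) le_rfl
  -- membership of F values in the vertex value set
  have hmem : ∀ k : ℕ, F p q s k ∈ (Finset.range (p + q + 1)).image (pathF p q s) := by
    intro k
    rw [F_mod p q s hp hs k, ← pathF_eq p q s (k % (p + q)) (le_of_lt (Nat.mod_lt _ hN)) hN]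
    exact Finset.mem_image_of_mem _ (Finset.mem_range.mpr (by
      have := Nat.mod_lt k hN; omega))
  have h1 := Finset.le_max' _ _ (hmem i)
  have h2 := Finset.min'_le _ _ (hmem (j + 1))
  unfold pathSpread at hthin
  -- arithmetic contradiction
  have hd : (j : ℤ) - (i : ℤ) - 1 ≤ (g : ℤ) - 2 := by omega
  have hd0 : (0 : ℤ) ≤ (j : ℤ) - (i : ℤ) - 1 := by omega
  have hpgz : (q : ℤ) * ((g : ℤ) - 1) < (p : ℤ) := by
    have : ((q * (g - 1) : ℕ) : ℤ) < (p : ℕ) := by exact_mod_cast hpg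
    push_cast [Nat.cast_sub hg] at this
    linarith
  have hmul : (q : ℤ) * ((j : ℤ) - (i : ℤ) - 1) ≤ (q : ℤ) * ((g : ℤ) - 2) := by
    apply mul_le_mul_of_nonneg_left hd (by positivity)
  have hdrop : F p q s i - F p q s (j + 1) > (p : ℤ) + q := by
    rw [hFj1, hFj, hFi1]
    nlinarith [hmul, hpgz]
  linarith
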